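/- Consider the ILO problem: minimize 3x₁ + x₂ subject to x₁ + x₂ + x₃ ≥ 2, x₁ − x₃ ≥ 0, −x₂ ≥ −1, x ∈ ℤ³. The point (1/2, 1, 1/2) is an optimal fractional solution of its LO relaxation (with optimal value 5/2), the optimal value of the ILO problem is 3 (attained at (1,0,1)), and the minimum of 3x₁ + x₂ over integer feasible solutions with x₂ = 1 is 4. In particular, no optimal integer solution z satisfies z₂ = 1, so the LO relaxation of this ILO problem (whose constraint matrix has a row with three nonzero entries, all equal to 1) is not persistent. -/

import Mathlib

/-- The ILO problem `min 3x₁ + x₂ s.t. x₁+x₂+x₃ ≥ 2, x₁-x₃ ≥ 0, -x₂ ≥ -1` (whose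
constraint matrix has a row with three nonzero entries, all equal to 1) is a
counterexample to persistency of the LO relaxation: `(1/2, 1, 1/2)` is an optimal
fractional solution (value `5/2`), the integer optimum is `3` (attained at `(1,0,1)`),
the minimum over integer feasible solutions with `x₂ = 1` is `4`, and no optimal
integer solution `z` has `z₂ = 1`. -/
theorem example_three_variable_row_not_persistent :
    -- (1/2, 1, 1/2) is feasible for the LO relaxation
    ((1 : ℝ)/2 + 1 + 1/2 ≥ 2 ∧ (1 : ℝ)/2 - 1/2 ≥ 0 ∧ -(1 : ℝ) ≥ -1) ∧
    -- and it is optimal, with objective value 5/2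
    (∀ x : Fin 3 → ℝ, (x 0 + x 1 + x 2 ≥ 2 ∧ x 0 - x 2 ≥ 0 ∧ -x 1 ≥ -1) →
      3 * x 0 + x 1 ≥ 5/2) ∧
    (3 * ((1 : ℝ)/2) + 1 = 5/2) ∧
    -- (1, 0, 1) is integer feasible with objective value 3, and this is optimal
    ((1 : ℤ) + 0 + 1 ≥ 2 ∧ (1 : ℤ) - 1 ≥ 0 ∧ -(0 : ℤ) ≥ -1) ∧
    (∀ z : Fin 3 → ℤ, (z 0 + z 1 + z 2 ≥ 2 ∧ z 0 - z 2 ≥ 0 ∧ -z 1 ≥ -1) →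
      3 * z 0 + z 1 ≥ 3) ∧
    (3 * (1 : ℤ) + 0 = 3) ∧
    -- the minimum over integer feasible solutions with x₂ = 1 is 4
    (∀ z : Fin 3 → ℤ, (z 0 + z 1 + z 2 ≥ 2 ∧ z 0 - z 2 ≥ 0 ∧ -z 1 ≥ -1) → z 1 = 1 →
      3 * z 0 + z 1 ≥ 4) ∧
    (∃ z : Fin 3 → ℤ, (z 0 + z 1 + z 2 ≥ 2 ∧ z 0 - z 2 ≥ 0 ∧ -z 1 ≥ -1) ∧ z 1 = 1 ∧
      3 * z 0 + z 1 = 4) ∧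
    -- hence no optimal integer solution has z₂ = 1
    (∀ z : Fin 3 → ℤ, (z 0 + z 1 + z 2 ≥ 2 ∧ z 0 - z 2 ≥ 0 ∧ -z 1 ≥ -1) →
      (∀ y : Fin 3 → ℤ, (y 0 + y 1 + y 2 ≥ 2 ∧ y 0 - y 2 ≥ 0 ∧ -y 1 ≥ -1) →
        3 * z 0 + z 1 ≤ 3 * y 0 + y 1) →
      z 1 ≠ 1) := by
  refine ⟨⟨by norm_num, by norm_num, by norm_num⟩, ?_, by norm_num,
    ⟨by norm_num, by norm_num, by norm_num⟩, ?_, by norm_num, ?_, ?_, ?_⟩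
  · rintro x ⟨h1, h2, h3⟩; linarith
  · rintro z ⟨h1, h2, h3⟩; omega
  · rintro z ⟨h1, h2, h3⟩ h4; omega
  · exact ⟨![1, 1, 1], ⟨by decide, by decide, by norm_num⟩, by norm_num, by norm_num⟩
  · rintro z ⟨h1, h2, h3⟩ hopt h4
    have := hopt ![1, 0, 1] ⟨by decide, by decide, by norm_num⟩
    simp at this
    omega
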